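/- Let A₁, A₂ be rank-3 real 3×4 matrices such that the 4×4 matrix formed by stacking the last row of A₁ on top of A₂ (equivalently, suitable genericity) makes the first four columns of the bottom 4×6 submatrix of B = [[A₁,u₁,0],[A₂,0,u₂]] linearly independent. If B has rank 5, then at least one of the two 5×6 submatrices B₁, B₂ obtained by deleting the first or second row of B has rank 5. -/
import Mathlib


def triMat (A₁ A₂ : Matrix (Fin 3) (Fin 4) ℝ) (u₁ u₂ : Fin 3 → ℝ) :
    Matrix (Fin 6) (Fin 6) ℝ :=
  Matrix.of fun i j =>
    if hi : (i : ℕ) < 3 then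
      if hj : (j : ℕ) < 4 then A₁ ⟨i, hi⟩ ⟨j, hj⟩
      else if (j : ℕ) = 4 then u₁ ⟨i, hi⟩ else 0
    else
      if hj : (j : ℕ) < 4 then A₂ ⟨(i : ℕ) - 3, by have := i.isLt; omega⟩ ⟨j, hj⟩
      else if (j : ℕ) = 4 then 0 else u₂ ⟨(i : ℕ) - 3, by have := i.isLt; omega⟩

/-- The 4×4 matrix obtained by stacking the last row of `A₁` on top of `A₂`:
the first four columns of the bottom 4×6 submatrix of `triMat A₁ A₂ u₁ u₂`. -/
def stackMat (A₁ A₂ : Matrix (Fin 3) (Fin 4) ℝ) : Matrix (Fin 4) (Fin 4) ℝ :=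
  Matrix.of fun i j =>
    if h : (i : ℕ) = 0 then A₁ 2 j
    else A₂ ⟨(i : ℕ) - 1, by have := i.isLt; omega⟩ j

/-- If the 4×4 matrix formed by the last row of `A₁` stacked on `A₂` is
invertible (genericity) and `B = [[A₁,u₁,0],[A₂,0,u₂]]` has rank 5, then at least one
of the 5×6 submatrices `B₁, B₂` obtained by deleting the first or second row of `B`
has rank 5. -/
theorem rank_five_deleted_row (A₁ A₂ : Matrix (Fin 3) (Fin 4) ℝ)
    (h1 : A₁.rank = 3) (h2 : A₂.rank = 3)
    (u₁ u₂ : Fin 3 → ℝ)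
    (hgen : (stackMat A₁ A₂).det ≠ 0)
    (hB : (triMat A₁ A₂ u₁ u₂).rank = 5) :
    ((triMat A₁ A₂ u₁ u₂).submatrix (Fin.succAbove 0) id).rank = 5 ∨
    ((triMat A₁ A₂ u₁ u₂).submatrix (Fin.succAbove 1) id).rank = 5 := by
  by_contra hc
  push_neg at hc
  obtain ⟨hc1, hc2⟩ := hc
  set B := triMat A₁ A₂ u₁ u₂ with hBdef
  -- the bottom four rows of B
  set v : Fin 4 → (Fin 6 → ℝ) := fun i => B ⟨(i : ℕ) + 2, by omega⟩ with hv
  have hle : (4 : ℕ) ≤ 6 := by norm_num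
  -- restriction to first four columns gives stackMat
  have hrestrict : ∀ (i j : Fin 4), v i (Fin.castLE hle j) = stackMat A₁ A₂ i j := by
    intro i j
    have hj : ((Fin.castLE hle j : Fin 6) : ℕ) < 4 := j.isLt
    simp only [hv, hBdef, triMat, stackMat, Matrix.of_apply]
    by_cases hi : (i : ℕ) = 0
    · have h3 : ((i : ℕ) + 2) < 3 := by omega
      rw [dif_pos h3, dif_pos hj, dif_pos hi]
      congr 1
      all_goals (apply Fin.ext; simp; try omega)
    · have h3 : ¬ ((i : ℕ) + 2) < 3 := by omega
      rw [dif_neg h3, dif_pos hj, dif_neg hi]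
      congr 1
      all_goals (apply Fin.ext; simp; try omega)
  have hvind : LinearIndependent ℝ v := by
    have hunit : IsUnit (stackMat A₁ A₂) := by
      rw [Matrix.isUnit_iff_isUnit_det]
      exact isUnit_iff_ne_zero.mpr hgen
    have hsind : LinearIndependent ℝ (fun i => stackMat A₁ A₂ i) :=
      Matrix.linearIndependent_rows_iff_isUnit.mpr hunit
    have hcomp : (LinearMap.funLeft ℝ ℝ (Fin.castLE hle)) ∘ v
        = fun i => stackMat A₁ A₂ i := by
      funext i j
      simpa [LinearMap.funLeft] using hrestrict i j
    exact LinearIndependent.of_comp (LinearMap.funLeft ℝ ℝ (Fin.castLE hle))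
      (hcomp ▸ hsind)
  -- the span of the bottom four rows
  set S : Submodule ℝ (Fin 6 → ℝ) := Submodule.span ℝ (Set.range v) with hS
  have hSfin : Module.finrank ℝ S = 4 := by
    rw [hS, finrank_span_eq_card hvind]; simp
  -- generic fact: rank ≤ 4 for the deleted-row matrices forces their row span = S
  have key : ∀ (p : Fin 6) (hp : (p : ℕ) < 2),
      (B.submatrix (Fin.succAbove ⟨p, by omega⟩) id).rank ≠ 5 →
      ∀ q : Fin 6, (q : ℕ) < 2 → q ≠ p → B q ∈ S := by
    intro p hp hrk q hq hqp
    set M := B.submatrix (Fin.succAbove ⟨(p : ℕ), by omega⟩) id with hM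
    have hle5 : M.rank ≤ 5 := by
      simpa using M.rank_le_card_height
    have hle4 : M.rank ≤ 4 := by omega
    have hspan : M.rank = Module.finrank ℝ (Submodule.span ℝ (Set.range M)) :=
      Matrix.rank_eq_finrank_span_row M
    -- S is contained in the row span of M
    have hsub : S ≤ Submodule.span ℝ (Set.range M) := by
      rw [hS]
      apply Submodule.span_le.mpr
      rintro x ⟨i, rfl⟩
      apply Submodule.subset_span
      refine ⟨⟨(i : ℕ) + 1, by omega⟩, ?_⟩
      rw [hM]
      refine congrArg B (Fin.ext ?_)
      simp only [Fin.succAbove, Fin.lt_def, Fin.castSucc_mk, Fin.succ_mk]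
      split_ifs <;> simp_all <;> omega
    have heq : S = Submodule.span ℝ (Set.range M) := by
      apply Submodule.eq_of_le_of_finrank_le hsub
      rw [← hspan, hSfin]; exact hle4
    -- B q is a row of M
    have hrow : B q ∈ Submodule.span ℝ (Set.range M) := by
      apply Submodule.subset_span
      have hne : (q : ℕ) ≠ (p : ℕ) := fun h => hqp (Fin.ext h)
      refine ⟨⟨0, by omega⟩, ?_⟩
      rw [hM]
      refine congrArg B (Fin.ext ?_)
      simp only [Fin.succAbove, Fin.lt_def, Fin.castSucc_mk, Fin.succ_mk]
      split_ifs <;> simp_all <;> omega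
    rw [heq]; exact hrow
  have h0 : B 0 ∈ S := by
    refine key 1 (by norm_num) ?_ 0 (by norm_num) (by decide)
    simpa using hc2
  have h1' : B 1 ∈ S := by
    refine key 0 (by norm_num) ?_ 1 (by norm_num) (by decide)
    simpa using hc1
  have hall : ∀ i : Fin 6, B i ∈ S := by
    intro i
    by_cases hi2 : (i : ℕ) < 2
    · interval_cases h : (i : ℕ)
      · convert h0 using 2; apply Fin.ext; simp [h]
      · convert h1' using 2; apply Fin.ext; simp [h]
    · refine Submodule.subset_span ⟨⟨(i : ℕ) - 2, by have := i.isLt; omega⟩, ?_⟩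
      show B _ = B i
      refine congrArg B (Fin.ext ?_); simp; omega
  have hBle : B.rank ≤ 4 := by
    rw [Matrix.rank_eq_finrank_span_row]
    calc Module.finrank ℝ (Submodule.span ℝ (Set.range B))
        ≤ Module.finrank ℝ S := by
          apply Submodule.finrank_mono
          exact Submodule.span_le.mpr (by rintro x ⟨i, rfl⟩; exact hall i)
      _ = 4 := hSfin
  omega
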